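/- For invertible matrices A, B ∈ ℝ^{d×d} and any 0 ≤ s < d, the singular value function is submultiplicative: φ^s(AB) ≤ φ^s(A) φ^s(B). -/

import Mathlib

open Matrix Finset Equiv BigOperators


/-- Singular values of `A` in decreasing order: square roots of the eigenvalues of `AᵀA`. -/
noncomputable def singVals {d : ℕ} (A : Matrix (Fin d) (Fin d) ℝ) : Fin d → ℝ :=
  fun j => Real.sqrt ((Matrix.isHermitian_conjTranspose_mul_self A).eigenvalues
    (Tuple.sort (Matrix.isHermitian_conjTranspose_mul_self A).eigenvalues j.rev))

/-- The singular value function `φ^s(A) = α₁(A)⋯α_l(A)·α_{l+1}(A)^{s-l}`, `l = ⌊s⌋`. -/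
noncomputable def svf {d : ℕ} (s : ℝ) (A : Matrix (Fin d) (Fin d) ℝ) : ℝ :=
  if h : ⌊s⌋₊ < d then
    (∏ j : Fin d, if (j : ℕ) < ⌊s⌋₊ then singVals A j else 1) *
      singVals A ⟨⌊s⌋₊, h⟩ ^ (s - (⌊s⌋₊ : ℝ))
  else 0

namespace SVF

variable {d k : ℕ}

/-- Index type for compound matrices: subsets of `Fin d` of cardinality `k`. -/
abbrev Idx (d k : ℕ) := {s : Finset (Fin d) // s.card = k}

/-- Monotone enumeration of a `k`-subset. -/
def emb (s : Idx d k) : Fin k → Fin d := s.1.orderEmbOfFin s.2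

lemma emb_strictMono (s : Idx d k) : StrictMono (emb s) :=
  (s.1.orderEmbOfFin s.2).strictMono

lemma emb_injective (s : Idx d k) : Function.Injective (emb s) :=
  (emb_strictMono s).injective

lemma emb_mem (s : Idx d k) (i : Fin k) : emb s i ∈ s.1 :=
  Finset.orderEmbOfFin_mem _ _ _

lemma image_emb (s : Idx d k) : Finset.univ.image (emb s) = s.1 := by
  apply Finset.coe_injective
  rw [Finset.coe_image, Finset.coe_univ, Set.image_univ]
  exact Finset.range_orderEmbOfFin _ _

lemma mem_iff_emb (s : Idx d k) (x : Fin d) : x ∈ s.1 ↔ ∃ i, emb s i = x := by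
  rw [← image_emb s]
  simp

/-- The subset associated to an injective tuple. -/
def sFin (p : Fin k → Fin d) (hp : Function.Injective p) : Idx d k :=
  ⟨Finset.univ.image p, by simp [Finset.card_image_of_injective _ hp]⟩

/-- The permutation relating an injective tuple to the monotone enumeration of its image. -/
noncomputable def permOf (p : Fin k → Fin d) (hp : Function.Injective p) : Perm (Fin k) :=
  Equiv.ofBijective
    (fun i => ((sFin p hp).1.orderIsoOfFin (sFin p hp).2).symm
      ⟨p i, by simp [sFin, Finset.mem_image]⟩)
    (by
      rw [← Finite.injective_iff_bijective]
      intro a b hab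
      apply hp
      have := congrArg (fun x => (((sFin p hp).1.orderIsoOfFin (sFin p hp).2) x).1) hab
      simpa using this)

lemma emb_sFin_permOf (p : Fin k → Fin d) (hp : Function.Injective p) (i : Fin k) :
    emb (sFin p hp) (permOf p hp i) = p i := by
  show (sFin p hp).1.orderEmbOfFin (sFin p hp).2 (permOf p hp i) = p i
  rw [← Finset.coe_orderIsoOfFin_apply]
  show ((((sFin p hp).1.orderIsoOfFin (sFin p hp).2))
    ((((sFin p hp).1.orderIsoOfFin (sFin p hp).2)).symm ⟨p i, _⟩) : Fin d) = p i
  rw [OrderIso.apply_symm_apply]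

lemma sFin_comp (s : Idx d k) (τ : Perm (Fin k))
    (h' : Function.Injective (emb s ∘ ⇑τ)) : sFin (emb s ∘ ⇑τ) h' = s := by
  apply Subtype.ext
  show Finset.univ.image (emb s ∘ ⇑τ) = s.1
  ext x
  simp only [Finset.mem_image, Finset.mem_univ, true_and, Function.comp_apply]
  constructor
  · rintro ⟨i, rfl⟩; exact emb_mem s (τ i)
  · intro hx
    obtain ⟨i, rfl⟩ := (mem_iff_emb s x).mp hx
    exact ⟨τ.symm i, by simp⟩

lemma permOf_comp (s : Idx d k) (τ : Perm (Fin k))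
    (h' : Function.Injective (emb s ∘ ⇑τ)) : permOf (emb s ∘ ⇑τ) h' = τ := by
  apply Equiv.ext
  intro i
  have h1 := sFin_comp s τ h'
  have h2 := emb_sFin_permOf (emb s ∘ ⇑τ) h' i
  rw [h1] at h2
  exact emb_injective s h2

/-- Cauchy–Binet formula. -/
theorem cauchyBinet (P : Matrix (Fin k) (Fin d) ℝ) (Q : Matrix (Fin d) (Fin k) ℝ) :
    det (P * Q) = ∑ s : Idx d k, det (P.submatrix id (emb s)) * det (Q.submatrix (emb s) id) := by
  classical
  have expand : det (P * Q)
      = ∑ p : Fin k → Fin d, (∏ i, Q (p i) i) * det (P.submatrix id p) := by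
    simp only [det_apply', mul_apply, Finset.prod_univ_sum, Fintype.piFinset_univ,
      Finset.mul_sum]
    rw [Finset.sum_comm]
    refine Finset.sum_congr rfl fun p _ => ?_
    simp only [det_apply', submatrix_apply, id_eq, Finset.mul_sum]
    refine Finset.sum_congr rfl fun σ _ => ?_
    rw [Finset.prod_mul_distrib]
    ring
  have restrict : ∑ p : Fin k → Fin d, (∏ i, Q (p i) i) * det (P.submatrix id p)
      = ∑ p ∈ Finset.univ.filter (fun p : Fin k → Fin d => Function.Injective p),
          (∏ i, Q (p i) i) * det (P.submatrix id p) := by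
    refine (Finset.sum_subset (Finset.subset_univ _) ?_).symm
    intro p _ hp
    simp only [Finset.mem_filter, Finset.mem_univ, true_and] at hp
    rw [Function.Injective] at hp; push_neg at hp
    obtain ⟨i, j, hij, hne⟩ := hp
    have : det (P.submatrix id p) = 0 :=
      Matrix.det_zero_of_column_eq hne fun r => by simp [submatrix_apply, hij]
    simp [this]
  have main : ∑ p ∈ Finset.univ.filter (fun p : Fin k → Fin d => Function.Injective p),
        (∏ i, Q (p i) i) * det (P.submatrix id p)
      = ∑ x : Idx d k × Perm (Fin k),
          (∏ i, Q ((emb x.1 ∘ ⇑x.2) i) i) * det (P.submatrix id (emb x.1 ∘ ⇑x.2)) := by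
    refine Finset.sum_bij'
      (i := fun p hp => (sFin p (by simpa using hp), permOf p (by simpa using hp)))
      (j := fun x _ => emb x.1 ∘ ⇑x.2)
      (fun p hp => Finset.mem_univ _)
      (fun x _ => by
        simp only [Finset.mem_filter, Finset.mem_univ, true_and]
        exact (emb_injective x.1).comp x.2.injective)
      ?_ ?_ ?_
    · intro p hp
      funext i
      exact emb_sFin_permOf p (by simpa using hp) i
    · intro x hx
      have h' : Function.Injective (emb x.1 ∘ ⇑x.2) :=
        (emb_injective x.1).comp x.2.injective
      exact Prod.ext (sFin_comp x.1 x.2 h') (permOf_comp x.1 x.2 h')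
    · intro p hp
      have hinj : Function.Injective p := by simpa using hp
      have : emb (sFin p hinj) ∘ ⇑(permOf p hinj) = p := funext (emb_sFin_permOf p hinj)
      rw [this]
  have inner : ∀ s : Idx d k,
      ∑ τ : Perm (Fin k), (∏ i, Q ((emb s ∘ ⇑τ) i) i) * det (P.submatrix id (emb s ∘ ⇑τ))
        = det (P.submatrix id (emb s)) * det (Q.submatrix (emb s) id) := by
    intro s
    have h1 : ∀ τ : Perm (Fin k),
        P.submatrix id (emb s ∘ ⇑τ) = (P.submatrix id (emb s)).submatrix id ⇑τ := fun τ => rfl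
    calc ∑ τ : Perm (Fin k), (∏ i, Q ((emb s ∘ ⇑τ) i) i) * det (P.submatrix id (emb s ∘ ⇑τ))
        = ∑ τ : Perm (Fin k), (∏ i, Q (emb s (τ i)) i)
            * ((Perm.sign τ : ℤ) * det (P.submatrix id (emb s))) := by
          refine Finset.sum_congr rfl fun τ _ => ?_
          rw [h1 τ, Matrix.det_permute']
          rfl
      _ = det (P.submatrix id (emb s)) * det (Q.submatrix (emb s) id) := by
          rw [det_apply' (Q.submatrix (emb s) id), Finset.mul_sum]
          refine Finset.sum_congr rfl fun τ _ => ?_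
          simp only [submatrix_apply, id_eq]
          ring
  rw [expand, restrict, main, Fintype.sum_prod_type]
  exact Finset.sum_congr rfl fun s _ => inner s

variable (k) in
/-- The `k`-th compound matrix. -/
noncomputable def cpd (M : Matrix (Fin d) (Fin d) ℝ) : Matrix (Idx d k) (Idx d k) ℝ :=
  fun a b => det (M.submatrix (emb a) (emb b))

lemma cpd_apply (M : Matrix (Fin d) (Fin d) ℝ) (a b : Idx d k) :
    cpd k M a b = det (M.submatrix (emb a) (emb b)) := rfl

lemma cpd_mul (M N : Matrix (Fin d) (Fin d) ℝ) : cpd k (M * N) = cpd k M * cpd k N := by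
  ext a b
  have h1 : (M * N).submatrix (emb a) (emb b)
      = (M.submatrix (emb a) id) * (N.submatrix id (emb b)) := by
    ext i j; simp [mul_apply, submatrix_apply]
  rw [cpd_apply, h1, cauchyBinet, mul_apply]
  refine Finset.sum_congr rfl fun s _ => ?_
  rw [submatrix_submatrix, submatrix_submatrix, cpd_apply, cpd_apply]
  simp

lemma cpd_transpose (M : Matrix (Fin d) (Fin d) ℝ) : cpd k Mᵀ = (cpd k M)ᵀ := by
  ext a b
  rw [cpd_apply, transpose_apply, cpd_apply, ← Matrix.det_transpose (M.submatrix (emb b) (emb a)),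
    Matrix.transpose_submatrix]

lemma cpd_diagonal (v : Fin d → ℝ) :
    cpd k (diagonal v) = diagonal (fun s : Idx d k => ∏ i ∈ s.1, v i) := by
  ext a b
  by_cases hab : a = b
  · subst hab
    rw [cpd_apply, diagonal_apply_eq]
    have h1 : (diagonal v).submatrix (emb a) (emb a) = diagonal (v ∘ emb a) := by
      ext i j
      by_cases hij : i = j
      · subst hij; simp
      · rw [submatrix_apply, diagonal_apply_ne _ (fun h => hij (emb_injective a h)),
          diagonal_apply_ne _ hij]
    rw [h1, det_diagonal, ← image_emb a, Finset.prod_image (fun x _ y _ h => emb_injective a h)]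
    rfl
  · rw [cpd_apply, diagonal_apply_ne _ hab]
    have hne : a.1 ≠ b.1 := fun h => hab (Subtype.ext h)
    have hsub : ¬ a.1 ⊆ b.1 := fun h => hne (Finset.eq_of_subset_of_card_le h (by rw [a.2, b.2]))
    obtain ⟨x, hxa, hxb⟩ := Finset.not_subset.mp hsub
    obtain ⟨i0, rfl⟩ := (mem_iff_emb a x).mp hxa
    apply Matrix.det_eq_zero_of_row_eq_zero i0
    intro j
    rw [submatrix_apply, diagonal_apply_ne]
    exact fun h => hxb (h ▸ emb_mem b j)

lemma cpd_one : cpd k (1 : Matrix (Fin d) (Fin d) ℝ) = 1 := by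
  rw [← Matrix.diagonal_one, cpd_diagonal]
  simp

/-- Conjugation form for the compound of a symmetric matrix. -/
lemma exists_conj (H : Matrix (Fin d) (Fin d) ℝ) (hH : H.IsHermitian) :
    ∃ R : Matrix (Idx d k) (Idx d k) ℝ, Rᵀ * R = 1 ∧ R * Rᵀ = 1 ∧
      cpd k H = R * diagonal (fun s : Idx d k => ∏ i ∈ s.1, hH.eigenvalues i) * Rᵀ := by
  set Q : Matrix (Fin d) (Fin d) ℝ := (hH.eigenvectorUnitary : Matrix (Fin d) (Fin d) ℝ) with hQdef
  have hstar : star Q = Qᵀ := by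
    rw [Matrix.star_eq_conjTranspose, Matrix.conjTranspose_eq_transpose_of_trivial]
  have hQ1 : Qᵀ * Q = 1 := by
    rw [← hstar]; exact Matrix.mem_unitaryGroup_iff'.mp (hH.eigenvectorUnitary).2
  have hQ2 : Q * Qᵀ = 1 := by
    rw [← hstar]; exact Matrix.mem_unitaryGroup_iff.mp (hH.eigenvectorUnitary).2
  have hspec : H = Q * diagonal hH.eigenvalues * Qᵀ := by
    have := hH.spectral_theorem
    rw [Unitary.conjStarAlgAut_apply, ← hQdef, hstar] at this
    simpa [RCLike.ofReal_real_eq_id] using this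
  refine ⟨cpd k Q, ?_, ?_, ?_⟩
  · rw [← cpd_transpose, ← cpd_mul, hQ1, cpd_one]
  · rw [← cpd_transpose, ← cpd_mul, hQ2, cpd_one]
  · rw [congrArg (cpd k) hspec, cpd_mul, cpd_mul, cpd_diagonal, cpd_transpose]

section Rayleigh

variable {ι : Type*} [Fintype ι] [DecidableEq ι]

lemma dot_conj (R : Matrix ι ι ℝ) (μ : ι → ℝ) (y : ι → ℝ) :
    y ⬝ᵥ (R * diagonal μ * Rᵀ) *ᵥ y = ∑ s, μ s * ((Rᵀ *ᵥ y) s) ^ 2 := by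
  rw [← mulVec_mulVec, ← mulVec_mulVec, dotProduct_mulVec, ← mulVec_transpose]
  simp only [dotProduct, mulVec_diagonal]
  exact Finset.sum_congr rfl fun s _ => by ring

lemma dot_z (R : Matrix ι ι ℝ) (hR : R * Rᵀ = 1) (y : ι → ℝ) :
    (Rᵀ *ᵥ y) ⬝ᵥ (Rᵀ *ᵥ y) = y ⬝ᵥ y := by
  nth_rewrite 1 [mulVec_transpose]
  rw [← dotProduct_mulVec, mulVec_mulVec, hR, one_mulVec]

lemma rayleigh_le (R : Matrix ι ι ℝ) (hR : R * Rᵀ = 1) (μ : ι → ℝ) (c : ℝ)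
    (hμ : ∀ s, μ s ≤ c) (y : ι → ℝ) :
    y ⬝ᵥ (R * diagonal μ * Rᵀ) *ᵥ y ≤ c * (y ⬝ᵥ y) := by
  rw [dot_conj, ← dot_z R hR y]
  have h1 : (Rᵀ *ᵥ y) ⬝ᵥ (Rᵀ *ᵥ y) = ∑ s, ((Rᵀ *ᵥ y) s) ^ 2 := by
    simp [dotProduct, pow_two]
  rw [h1, Finset.mul_sum]
  exact Finset.sum_le_sum fun s _ => mul_le_mul_of_nonneg_right (hμ s) (sq_nonneg _)

lemma rayleigh_witness (R : Matrix ι ι ℝ) (hR : Rᵀ * R = 1) (μ : ι → ℝ) (s₀ : ι) :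
    ∃ y : ι → ℝ, y ⬝ᵥ y = 1 ∧ y ⬝ᵥ (R * diagonal μ * Rᵀ) *ᵥ y = μ s₀ := by
  refine ⟨fun t => R t s₀, ?_, ?_⟩
  · have h1 : (fun t => R t s₀) ⬝ᵥ (fun t => R t s₀) = (Rᵀ * R) s₀ s₀ := by
      simp [dotProduct, mul_apply, transpose_apply]
    rw [h1, hR, one_apply_eq]
  · rw [dot_conj]
    have hz : ∀ t, (Rᵀ *ᵥ (fun r => R r s₀)) t = (1 : Matrix ι ι ℝ) t s₀ := by
      intro t
      rw [← hR]
      simp [mulVec, dotProduct, mul_apply, transpose_apply]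
    simp only [hz]
    rw [Finset.sum_eq_single s₀]
    · rw [one_apply_eq]; ring
    · intro b _ hb
      rw [one_apply_ne hb]; ring
    · intro h; exact absurd (Finset.mem_univ _) h

end Rayleigh

section Sing

/-- Index set `{d-k, ..., d-1}` of the `k` largest (sorted) positions. -/
def topIdx (hk : k ≤ d) : Finset (Fin d) :=
  Finset.univ.image fun j : Fin k => (⟨d - k + j.1, by have := j.isLt; omega⟩ : Fin d)

lemma card_topIdx (hk : k ≤ d) : (topIdx hk).card = k := by
  rw [topIdx, Finset.card_image_of_injective, Finset.card_univ, Fintype.card_fin]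
  intro a b hab
  have h := congrArg Fin.val hab
  simp only at h
  exact Fin.ext (by omega)

def topS (hk : k ≤ d) : Idx d k := ⟨topIdx hk, card_topIdx hk⟩

lemma prod_emb (s : Idx d k) (f : Fin d → ℝ) :
    ∏ j : Fin k, f (emb s j) = ∏ i ∈ s.1, f i := by
  rw [← image_emb s, Finset.prod_image (fun x _ y _ h => emb_injective s h)]

lemma emb_topS (hk : k ≤ d) (j : Fin k) :
    emb (topS hk) j = (⟨d - k + j.1, by have := j.isLt; omega⟩ : Fin d) := by
  have h : (fun j : Fin k => (⟨d - k + j.1, by have := j.isLt; omega⟩ : Fin d))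
      = (topIdx hk).orderEmbOfFin (card_topIdx hk) := by
    apply Finset.orderEmbOfFin_unique
    · intro i; exact Finset.mem_image_of_mem _ (Finset.mem_univ i)
    · intro a b hab
      have ha := a.isLt; have hb := b.isLt
      have : (a : ℕ) < b := hab
      exact Fin.mk_lt_mk.mpr (by omega)
  exact (congrFun h j).symm

lemma prod_le_top (g : Fin d → ℝ) (hg0 : ∀ i, 0 ≤ g i) (hg : Monotone g) (hk : k ≤ d)
    (s : Idx d k) : ∏ i ∈ s.1, g i ≤ ∏ i ∈ topIdx hk, g i := by
  rw [← prod_emb s, show topIdx hk = (topS hk).1 from rfl, ← prod_emb (topS hk)]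
  refine Finset.prod_le_prod (fun j _ => hg0 _) (fun j _ => hg ?_)
  rw [emb_topS hk j]
  have hcard : ((Finset.Ioi j).image (emb s)).card = (Finset.Ioi j).card :=
    Finset.card_image_of_injective _ (emb_injective s)
  have hsubset : (Finset.Ioi j).image (emb s) ⊆ Finset.Ioi (emb s j) := by
    intro x hx
    simp only [Finset.mem_image, Finset.mem_Ioi] at hx ⊢
    obtain ⟨j', hj', rfl⟩ := hx
    exact emb_strictMono s hj'
  have hle := Finset.card_le_card hsubset
  rw [hcard, Fin.card_Ioi, Fin.card_Ioi] at hle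
  have h1 : (emb s j : ℕ) < d := (emb s j).isLt
  have h2 : (j : ℕ) < k := j.isLt
  rw [Fin.le_def]
  simp only
  omega

variable (d) in
/-- Product of the largest `k` singular values (padded by 1). -/
noncomputable def pSV (k : ℕ) (M : Matrix (Fin d) (Fin d) ℝ) : ℝ :=
  ∏ j : Fin d, if (j : ℕ) < k then singVals M j else 1

/-- Eigenvalues of `Mᴴ * M`. -/
noncomputable def ev (M : Matrix (Fin d) (Fin d) ℝ) : Fin d → ℝ :=
  (Matrix.isHermitian_conjTranspose_mul_self M).eigenvalues

lemma ev_nonneg (M : Matrix (Fin d) (Fin d) ℝ) (i : Fin d) : 0 ≤ ev M i :=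
  Matrix.eigenvalues_conjTranspose_mul_self_nonneg M i

lemma singVals_eq (M : Matrix (Fin d) (Fin d) ℝ) (j : Fin d) :
    singVals M j = Real.sqrt ((ev M ∘ (Tuple.sort (ev M))) j.rev) := rfl

lemma topIdx_eq (hk : k ≤ d) :
    (Finset.univ.filter fun j : Fin d => (j : ℕ) < k).image Fin.rev = topIdx hk := by
  ext x
  simp only [topIdx, Finset.mem_image, Finset.mem_filter, Finset.mem_univ, true_and]
  constructor
  · rintro ⟨j, hj, rfl⟩
    have hjd := j.isLt
    refine ⟨⟨k - 1 - j.1, by omega⟩, ?_⟩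
    apply Fin.ext
    rw [Fin.val_rev]
    simp only
    omega
  · rintro ⟨j, rfl⟩
    have hjk := j.isLt
    refine ⟨⟨d - 1 - (d - k + j.1), by omega⟩, by simp only; omega, ?_⟩
    apply Fin.ext
    rw [Fin.val_rev]
    simp only
    omega

lemma pSV_eq (hk : k ≤ d) (M : Matrix (Fin d) (Fin d) ℝ) :
    pSV d k M = ∏ i ∈ topIdx hk, Real.sqrt ((ev M ∘ (Tuple.sort (ev M))) i) := by
  rw [pSV, Finset.prod_ite, Finset.prod_const_one, mul_one]
  rw [← topIdx_eq hk, Finset.prod_image (fun x _ y _ h => Fin.rev_injective h)]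
  exact Finset.prod_congr rfl fun j _ => singVals_eq M j

variable (k) in
/-- The index subset achieving the top-`k` eigenvalue product. -/
noncomputable def sTop (hk : k ≤ d) (M : Matrix (Fin d) (Fin d) ℝ) : Idx d k :=
  ⟨(topIdx hk).image (Tuple.sort (ev M)),
    by rw [Finset.card_image_of_injective _ (Equiv.injective _), card_topIdx]⟩

lemma pSV_sq (hk : k ≤ d) (M : Matrix (Fin d) (Fin d) ℝ) :
    (pSV d k M) ^ 2 = ∏ i ∈ (sTop k hk M).1, ev M i := by
  rw [pSV_eq hk, ← Finset.prod_pow]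
  simp only [Function.comp_apply]
  have h3 : ∏ x ∈ topIdx hk, Real.sqrt (ev M (Tuple.sort (ev M) x)) ^ 2
      = ∏ x ∈ topIdx hk, ev M (Tuple.sort (ev M) x) :=
    Finset.prod_congr rfl fun i _ => Real.sq_sqrt (ev_nonneg M _)
  rw [h3, show (sTop k hk M).1 = (topIdx hk).image (Tuple.sort (ev M)) from rfl,
    Finset.prod_image (fun x _ y _ h => Equiv.injective _ h)]

lemma pSV_nonneg (M : Matrix (Fin d) (Fin d) ℝ) : 0 ≤ pSV d k M := by
  refine Finset.prod_nonneg fun j _ => ?_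
  split
  · exact Real.sqrt_nonneg _
  · exact zero_le_one

lemma prod_ev_le (hk : k ≤ d) (M : Matrix (Fin d) (Fin d) ℝ) (s : Idx d k) :
    ∏ i ∈ s.1, ev M i ≤ (pSV d k M) ^ 2 := by
  set σ := Tuple.sort (ev M) with hσ
  have h1 : ∏ i ∈ s.1, ev M i = ∏ x ∈ s.1.image σ.symm, (ev M ∘ σ) x := by
    rw [Finset.prod_image (fun x _ y _ h => Equiv.injective _ h)]
    exact Finset.prod_congr rfl fun i _ => by simp
  rw [h1, pSV_sq hk]
  have h2 : ∏ i ∈ (sTop k hk M).1, ev M i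
      = ∏ i ∈ topIdx hk, (ev M ∘ σ) i := by
    rw [show (sTop k hk M).1 = (topIdx hk).image σ from rfl,
      Finset.prod_image (fun x _ y _ h => Equiv.injective _ h)]
    exact Finset.prod_congr rfl fun _ _ => rfl
  rw [h2]
  exact prod_le_top (ev M ∘ σ) (fun i => ev_nonneg M _) (Tuple.monotone_sort (ev M)) hk
    ⟨s.1.image σ.symm, by rw [Finset.card_image_of_injective _ (Equiv.injective _), s.2]⟩

end Sing

section Horn

lemma horn (hk : k ≤ d) (A B : Matrix (Fin d) (Fin d) ℝ) :
    pSV d k (A * B) ≤ pSV d k A * pSV d k B := by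
  have hsq : (pSV d k (A * B)) ^ 2 ≤ (pSV d k A * pSV d k B) ^ 2 := by
    obtain ⟨R, hR1, hR2, hconj⟩ :=
      exists_conj (k := k) ((A * B)ᴴ * (A * B)) (Matrix.isHermitian_conjTranspose_mul_self (A * B))
    obtain ⟨y, hy1, hy2⟩ := rayleigh_witness R hR1 _ (sTop k hk (A * B))
    rw [← hconj] at hy2
    have hstart : (pSV d k (A * B)) ^ 2 = y ⬝ᵥ (cpd k ((A * B)ᴴ * (A * B))) *ᵥ y := by
      rw [pSV_sq hk]
      exact hy2.symm
    set w := (cpd k B) *ᵥ y with hw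
    have hBt : cpd k Bᴴ = (cpd k B)ᵀ := by
      rw [Matrix.conjTranspose_eq_transpose_of_trivial, cpd_transpose]
    have hfact : (A * B)ᴴ * (A * B) = Bᴴ * ((Aᴴ * A) * B) := by
      rw [Matrix.conjTranspose_mul, Matrix.mul_assoc, ← Matrix.mul_assoc Aᴴ A B]
    have hsplit : y ⬝ᵥ (cpd k ((A * B)ᴴ * (A * B))) *ᵥ y
        = w ⬝ᵥ (cpd k (Aᴴ * A)) *ᵥ w := by
      rw [hfact, cpd_mul, cpd_mul, hBt, cpd_mul]
      rw [← mulVec_mulVec, dotProduct_mulVec, vecMul_transpose, ← mulVec_mulVec, ← hw]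
    obtain ⟨RA, hRA1, hRA2, hconjA⟩ :=
      exists_conj (k := k) (Aᴴ * A) (Matrix.isHermitian_conjTranspose_mul_self A)
    have hA_bound : w ⬝ᵥ (cpd k (Aᴴ * A)) *ᵥ w ≤ (pSV d k A) ^ 2 * (w ⬝ᵥ w) := by
      rw [hconjA]
      exact rayleigh_le RA hRA2 _ _ (fun s => prod_ev_le hk A s) w
    obtain ⟨RB, hRB1, hRB2, hconjB⟩ :=
      exists_conj (k := k) (Bᴴ * B) (Matrix.isHermitian_conjTranspose_mul_self B)
    have hww : w ⬝ᵥ w = y ⬝ᵥ (cpd k (Bᴴ * B)) *ᵥ y := by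
      rw [cpd_mul, hBt]
      calc w ⬝ᵥ w = (y ᵥ* (cpd k B)ᵀ) ⬝ᵥ w := by rw [vecMul_transpose, ← hw]
        _ = y ⬝ᵥ ((cpd k B)ᵀ *ᵥ w) := (dotProduct_mulVec _ _ _).symm
        _ = y ⬝ᵥ ((cpd k B)ᵀ * cpd k B) *ᵥ y := by rw [hw, mulVec_mulVec]
    have hB_bound : y ⬝ᵥ (cpd k (Bᴴ * B)) *ᵥ y ≤ (pSV d k B) ^ 2 * (y ⬝ᵥ y) := by
      rw [hconjB]
      exact rayleigh_le RB hRB2 _ _ (fun s => prod_ev_le hk B s) y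
    calc (pSV d k (A * B)) ^ 2 = w ⬝ᵥ (cpd k (Aᴴ * A)) *ᵥ w := by rw [hstart, hsplit]
      _ ≤ (pSV d k A) ^ 2 * (w ⬝ᵥ w) := hA_bound
      _ ≤ (pSV d k A) ^ 2 * ((pSV d k B) ^ 2 * 1) := by
          refine mul_le_mul_of_nonneg_left ?_ (sq_nonneg _)
          rw [hww]
          calc y ⬝ᵥ (cpd k (Bᴴ * B)) *ᵥ y ≤ (pSV d k B) ^ 2 * (y ⬝ᵥ y) := hB_bound
            _ = (pSV d k B) ^ 2 * 1 := by rw [hy1]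
      _ = (pSV d k A * pSV d k B) ^ 2 := by ring
  have h1 : 0 ≤ pSV d k (A * B) := pSV_nonneg _
  have h2 : 0 ≤ pSV d k A * pSV d k B := mul_nonneg (pSV_nonneg _) (pSV_nonneg _)
  calc pSV d k (A * B) = Real.sqrt ((pSV d k (A * B)) ^ 2) := (Real.sqrt_sq h1).symm
    _ ≤ Real.sqrt ((pSV d k A * pSV d k B) ^ 2) := Real.sqrt_le_sqrt hsq
    _ = pSV d k A * pSV d k B := Real.sqrt_sq h2

end Horn

section Interp

lemma singVals_pos {M : Matrix (Fin d) (Fin d) ℝ} (hM : IsUnit M) (j : Fin d) :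
    0 < singVals M j := by
  have hpd : (Mᴴ * M).PosDef :=
    Matrix.PosDef.conjTranspose_mul_self M (Matrix.mulVec_injective_iff_isUnit.mpr hM)
  have hev : 0 < ev M (Tuple.sort (ev M) j.rev) := hpd.eigenvalues_pos _
  exact Real.sqrt_pos.mpr hev

lemma pSV_pos {M : Matrix (Fin d) (Fin d) ℝ} (hM : IsUnit M) (k : ℕ) :
    0 < pSV d k M := by
  refine Finset.prod_pos fun j _ => ?_
  split
  · exact singVals_pos hM j
  · exact zero_lt_one

lemma pSV_succ (hl : k < d) (M : Matrix (Fin d) (Fin d) ℝ) :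
    pSV d (k + 1) M = pSV d k M * singVals M ⟨k, hl⟩ := by
  rw [pSV, pSV, Finset.prod_ite, Finset.prod_const_one, mul_one,
    Finset.prod_ite, Finset.prod_const_one, mul_one]
  have hins : (Finset.univ.filter fun j : Fin d => (j : ℕ) < k + 1)
      = insert (⟨k, hl⟩ : Fin d) (Finset.univ.filter fun j : Fin d => (j : ℕ) < k) := by
    ext x
    simp only [Finset.mem_filter, Finset.mem_univ, true_and, Finset.mem_insert, Fin.ext_iff]
    omega
  rw [hins, Finset.prod_insert (by simp)]
  ring

lemma svf_eq {M : Matrix (Fin d) (Fin d) ℝ} (hM : IsUnit M) {s : ℝ} (hl : ⌊s⌋₊ < d)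
    (ht0 : 0 ≤ s - (⌊s⌋₊ : ℝ)) (ht1 : s - (⌊s⌋₊ : ℝ) < 1) :
    svf s M = (pSV d ⌊s⌋₊ M) ^ (1 - (s - (⌊s⌋₊ : ℝ)))
      * (pSV d (⌊s⌋₊ + 1) M) ^ (s - (⌊s⌋₊ : ℝ)) := by
  set t := s - (⌊s⌋₊ : ℝ) with htdef
  have hP : 0 < pSV d ⌊s⌋₊ M := pSV_pos hM _
  have hα : 0 < singVals M ⟨⌊s⌋₊, hl⟩ := singVals_pos hM _
  rw [svf, dif_pos hl, pSV_succ hl M,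
    Real.mul_rpow hP.le hα.le, ← mul_assoc, ← Real.rpow_add hP,
    show (1 - t) + t = 1 by ring, Real.rpow_one]
  rfl

end Interp

end SVF

/-- Submultiplicativity of the singular value function. -/
theorem stmt12 {d : ℕ} (A B : Matrix (Fin d) (Fin d) ℝ)
    (hA : IsUnit A) (hB : IsUnit B) (s : ℝ) (hs : 0 ≤ s) (hsd : s < d) :
    svf s (A * B) ≤ svf s A * svf s B := by
  have hl : ⌊s⌋₊ < d := (Nat.floor_lt hs).mpr hsd
  have ht0 : 0 ≤ s - (⌊s⌋₊ : ℝ) := sub_nonneg.mpr (Nat.floor_le hs)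
  have ht1 : s - (⌊s⌋₊ : ℝ) < 1 := by
    have := Nat.lt_floor_add_one s
    linarith
  have hAB : IsUnit (A * B) := hA.mul hB
  rw [SVF.svf_eq hAB hl ht0 ht1, SVF.svf_eq hA hl ht0 ht1, SVF.svf_eq hB hl ht0 ht1]
  set t := s - (⌊s⌋₊ : ℝ) with htdef
  have h1t : 0 ≤ 1 - t := by linarith
  have e1 : SVF.pSV d ⌊s⌋₊ (A * B) ≤ SVF.pSV d ⌊s⌋₊ A * SVF.pSV d ⌊s⌋₊ B :=
    SVF.horn hl.le A B
  have e2 : SVF.pSV d (⌊s⌋₊ + 1) (A * B) ≤ SVF.pSV d (⌊s⌋₊ + 1) A * SVF.pSV d (⌊s⌋₊ + 1) B :=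
    SVF.horn hl A B
  calc SVF.pSV d ⌊s⌋₊ (A * B) ^ (1 - t) * SVF.pSV d (⌊s⌋₊ + 1) (A * B) ^ t
      ≤ (SVF.pSV d ⌊s⌋₊ A * SVF.pSV d ⌊s⌋₊ B) ^ (1 - t)
        * (SVF.pSV d (⌊s⌋₊ + 1) A * SVF.pSV d (⌊s⌋₊ + 1) B) ^ t := by
        apply mul_le_mul
        · exact Real.rpow_le_rpow (SVF.pSV_nonneg _) e1 h1t
        · exact Real.rpow_le_rpow (SVF.pSV_nonneg _) e2 ht0
        · exact Real.rpow_nonneg (SVF.pSV_nonneg _) _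
        · exact Real.rpow_nonneg (mul_nonneg (SVF.pSV_nonneg _) (SVF.pSV_nonneg _)) _
    _ = _ := by
        rw [Real.mul_rpow (SVF.pSV_nonneg _) (SVF.pSV_nonneg _),
          Real.mul_rpow (SVF.pSV_nonneg _) (SVF.pSV_nonneg _)]
        ring
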